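/- Let P be a weak (ε_{2k}, 2)-uniform noisy sample of K, and suppose that for some k' ≤ k, P is also a (ε_{k'}, c)-uniform noisy sample of K. Then after one declutter-resample step with parameter 2k and resampling constant C = 10 + 2√2 (i.e. P' = P ∩ ⋃_{q∈Q} B(q, C d_{P,2k}(q)) where Q = Declutter(P, 2k)), the set P' is still a (ε_{k'}, c)-uniform noisy sample of K. -/

import Mathlib

open Metric List

/-- Core loop of the Declutter algorithm: scan the (pre-sorted) list, keeping a point `p`
iff no previously kept point lies in the open ball `B(p, 2 f p)` (w.r.t. distance `d`). -/
noncomputable def declutterAux {X : Type*} (d : X → X → ℝ) (f : X → ℝ) :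
    List X → List X → List X
  | Q, [] => Q
  | Q, p :: rest =>
    if ∀ q ∈ Q, 2 * f p ≤ d p q then declutterAux d f (Q ++ [p]) rest
    else declutterAux d f Q rest

noncomputable def declutter {X : Type*} (d : X → X → ℝ) (f : X → ℝ) (L : List X) : List X :=
  declutterAux d f [] L

/-- `Q` is a possible output of the Declutter algorithm on `P`, with robust distance
function `f`: the points of `P` are processed in nondecreasing order of `f`
(ties broken arbitrarily). -/
def IsDeclutterOutput {X : Type*} (d : X → X → ℝ) (f : X → ℝ) (P : Finset X)
    (Q : List X) : Prop :=
  ∃ L : List X, L.Perm P.toList ∧ L.Pairwise (fun a b => f a ≤ f b) ∧ Q = declutter d f L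


lemma sublist_get_le : ∀ {l₁ l₂ : List ℝ}, l₁ <+ l₂ → l₂.Pairwise (· ≤ ·) →
    ∀ i (h₁ : i < l₁.length) (h₂ : i < l₂.length), l₂.get ⟨i, h₂⟩ ≤ l₁.get ⟨i, h₁⟩ := by
  intro l₁ l₂ h
  induction h with
  | slnil => intro _ i h₁ _; simp at h₁
  | @cons l₁ l₂ a h ih =>
      intro hs i h₁ h₂
      have h₂' : i < l₂.length := lt_of_lt_of_le h₁ h.length_le
      refine le_trans ?_ (ih hs.of_cons i h₁ h₂')
      have h3 : (a :: l₂).get ⟨i, h₂⟩ ≤ (a :: l₂).get ⟨i+1, by simpa using h₂'⟩ :=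
        hs.rel_get_of_le (by simp)
      simpa using h3
  | @cons_cons l₁ l₂ a h ih =>
      intro hs i h₁ h₂
      cases i with
      | zero => simp
      | succ j => simpa using ih hs.of_cons j (by simpa using h₁) (by simpa using h₂)

lemma take_sort_sq_sum_le (u t : Multiset ℝ) (h : u ≤ t) (hnn : ∀ a ∈ t, 0 ≤ a) :
    (((t.sort (· ≤ ·)).take (Multiset.card u)).map (fun r => r ^ 2)).sum
      ≤ (u.map (fun r => r ^ 2)).sum := by
  set l₁ := u.sort (· ≤ ·) with hl₁
  set l₂ := t.sort (· ≤ ·) with hl₂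
  have hsub : l₁ <+ l₂ := by
    refine List.sublist_of_subperm_of_pairwise ?_ (Multiset.pairwise_sort _ _) (Multiset.pairwise_sort _ _)
    rw [← Multiset.coe_le, Multiset.sort_eq, Multiset.sort_eq]; exact h
  have hlen₁ : l₁.length = Multiset.card u := Multiset.length_sort _
  have hlenle : Multiset.card u ≤ l₂.length := by rw [← hlen₁]; exact hsub.length_le
  have hF : List.Forall₂ (· ≤ ·) ((l₂.take (Multiset.card u)).map (fun r => r ^ 2))
      (l₁.map (fun r => r ^ 2)) := by
    rw [List.forall₂_iff_get]
    constructor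
    · simp [hlen₁, min_eq_left hlenle]
    · intro i hi₁ hi₂
      simp only [List.get_eq_getElem, List.getElem_map, List.getElem_take]
      have hi₂' : i < l₁.length := hi₂.trans_le (by simp)
      have hi₁' : i < l₂.length := lt_of_lt_of_le (by simpa [hlen₁, min_eq_left hlenle] using hi₁) hlenle
      have hle : l₂.get ⟨i, hi₁'⟩ ≤ l₁.get ⟨i, hi₂'⟩ :=
        sublist_get_le hsub (Multiset.pairwise_sort _ _) i hi₂' hi₁'
      have hmem : l₂.get ⟨i, hi₁'⟩ ∈ l₂ := List.get_mem _ _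
      have hnn2 : 0 ≤ l₂.get ⟨i, hi₁'⟩ := hnn _ ((Multiset.mem_sort _).mp hmem)
      simpa using pow_le_pow_left₀ hnn2 hle 2
  have := hF.sum_le_sum
  calc (((t.sort (· ≤ ·)).take (Multiset.card u)).map (fun r => r ^ 2)).sum
      ≤ (l₁.map (fun r => r ^ 2)).sum := this
    _ = (u.map (fun r => r ^ 2)).sum := by
        rw [← Multiset.sort_eq u (· ≤ ·), ← hl₁, Multiset.map_coe, Multiset.sum_coe]

lemma exists_realization {α : Type*} [DecidableEq α] (f : α → ℝ) :
    ∀ (t : Multiset ℝ) (s : Multiset α), t ≤ s.map f → ∃ u, u ≤ s ∧ u.map f = t := by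
  intro t
  induction t using Multiset.induction_on with
  | empty => exact fun s _ => ⟨0, Multiset.zero_le _, rfl⟩
  | cons a t ih =>
    intro s hle
    have ha : a ∈ s.map f := Multiset.mem_of_le hle (Multiset.mem_cons_self _ _)
    obtain ⟨b, hb, hfb⟩ := Multiset.mem_map.mp ha
    have h1 : t ≤ (s.erase b).map f := by
      have h2 : (a ::ₘ t).erase a ≤ (s.map f).erase a := Multiset.erase_le_erase a hle
      rw [Multiset.erase_cons_head] at h2
      have h3 : (s.map f).erase a = (s.erase b).map f := by
        conv_lhs => rw [← Multiset.cons_erase hb]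
        rw [Multiset.map_cons, hfb, Multiset.erase_cons_head]
      rwa [h3] at h2
    obtain ⟨u, hu, hmap⟩ := ih _ h1
    refine ⟨b ::ₘ u, ?_, by simp [hmap, hfb]⟩
    calc b ::ₘ u ≤ b ::ₘ s.erase b := Multiset.cons_le_cons _ hu
      _ = s := Multiset.cons_erase hb

lemma declutterAux_acc_mem {X : Type*} (d : X → X → ℝ) (f : X → ℝ) :
    ∀ (rest Q : List X), ∀ q ∈ Q, q ∈ declutterAux d f Q rest := by
  intro rest
  induction rest with
  | nil => intro Q q hq; simpa [declutterAux] using hq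
  | cons p rest ih =>
    intro Q q hq
    rw [declutterAux]
    split
    · exact ih _ q (by simp [hq])
    · exact ih _ q hq

lemma declutterAux_subset {X : Type*} (d : X → X → ℝ) (f : X → ℝ) :
    ∀ (rest Q : List X), ∀ q ∈ declutterAux d f Q rest, q ∈ Q ∨ q ∈ rest := by
  intro rest
  induction rest with
  | nil => intro Q q hq; left; simpa [declutterAux] using hq
  | cons p rest ih =>
    intro Q q hq
    rw [declutterAux] at hq
    split at hq
    · rcases ih _ q hq with h | h
      · rcases List.mem_append.mp h with h | h
        · exact Or.inl h
        · right; simp only [List.mem_singleton] at h; simp [h]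
      · right; simp [h]
    · rcases ih _ q hq with h | h
      · exact Or.inl h
      · right; simp [h]

lemma declutterAux_cover {X : Type*} (d : X → X → ℝ) (f : X → ℝ)
    (hf : ∀ p, 0 ≤ f p) (hd : ∀ p, d p p = 0) :
    ∀ (rest Q : List X), ∀ p ∈ rest, ∃ q ∈ declutterAux d f Q rest, d p q ≤ 2 * f p := by
  intro rest
  induction rest with
  | nil => intro Q p hp; simp at hp
  | cons p' rest ih =>
    intro Q p hp
    rcases List.mem_cons.mp hp with rfl | hp
    · rw [declutterAux]
      split
      · refine ⟨p, declutterAux_acc_mem d f rest _ p (by simp), ?_⟩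
        rw [hd]
        have := hf p
        linarith
      · next h =>
          push_neg at h
          obtain ⟨q, hqQ, hlt⟩ := h
          exact ⟨q, declutterAux_acc_mem d f rest _ q hqQ, hlt.le⟩
    · rw [declutterAux]; split <;> exact ih _ p hp

variable {X : Type*} [MetricSpace X]

/-- Sorted (nondecreasing) list of distances from `x` to the points of `P`. -/
noncomputable def sortedDists (P : Finset X) (x : X) : List ℝ :=
  (P.val.map (dist x)).sort (· ≤ ·)

/-- The k-distance: root mean square of the distances to the k nearest neighbors in `P`. -/
noncomputable def kdist (P : Finset X) (k : ℕ) (x : X) : ℝ :=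
  Real.sqrt ((1 / (k : ℝ)) * (((sortedDists P x).take k).map (fun r => r ^ 2)).sum)


lemma kdist_nonneg (P : Finset X) (k : ℕ) (x : X) : 0 ≤ kdist P k x := Real.sqrt_nonneg _

lemma sortedDists_nonneg {P : Finset X} {x : X} {a : ℝ} (h : a ∈ sortedDists P x) : 0 ≤ a := by
  rw [sortedDists, Multiset.mem_sort] at h
  obtain ⟨p, _, rfl⟩ := Multiset.mem_map.mp h
  exact dist_nonneg

lemma length_sortedDists (P : Finset X) (x : X) : (sortedDists P x).length = P.card := by
  rw [sortedDists, Multiset.length_sort, Multiset.card_map]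
  rfl

lemma sortedDists_sorted (P : Finset X) (x : X) : (sortedDists P x).Pairwise (· ≤ ·) :=
  Multiset.pairwise_sort _ _

lemma kdist_le_finset (P : Finset X) (m : ℕ) (x : X) (S : Finset X) (hS : S ⊆ P)
    (hcard : S.card = m) :
    kdist P m x ≤ Real.sqrt ((1 / (m : ℝ)) * ∑ q ∈ S, dist x q ^ 2) := by
  apply Real.sqrt_le_sqrt
  refine mul_le_mul_of_nonneg_left ?_ (by positivity)
  have h := take_sort_sq_sum_le (S.val.map (dist x)) (P.val.map (dist x))
    (Multiset.map_le_map (Finset.val_le_iff.mpr hS)) (by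
      intro a ha; obtain ⟨p, _, rfl⟩ := Multiset.mem_map.mp ha; exact dist_nonneg)
  rw [Multiset.card_map] at h
  have hc : S.val.card = m := hcard
  rw [hc] at h
  refine le_trans (le_of_eq ?_) (h.trans (le_of_eq ?_))
  · rfl
  · rw [Multiset.map_map, Finset.sum]
    rfl

lemma kdist_exists_finset (P : Finset X) (m : ℕ) (x : X) (hm : m ≤ P.card) :
    ∃ S : Finset X, S ⊆ P ∧ S.card = m ∧
      kdist P m x = Real.sqrt ((1 / (m : ℝ)) * ∑ q ∈ S, dist x q ^ 2) ∧
      ∀ q ∈ S, dist x q ∈ (sortedDists P x).take m := by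
  classical
  set t := (sortedDists P x).take m with ht
  have hsub : (↑t : Multiset ℝ) ≤ P.val.map (dist x) := by
    have h1 : t <+ sortedDists P x := List.take_sublist _ _
    calc (↑t : Multiset ℝ) ≤ ↑(sortedDists P x) := Multiset.coe_le.mpr h1.subperm
      _ = P.val.map (dist x) := Multiset.sort_eq _ _
  obtain ⟨u, hu, hmap⟩ := exists_realization (dist x) ↑t P.val hsub
  have hnodup : u.Nodup := Multiset.nodup_of_le hu P.nodup
  have hcardu : u.card = m := by
    have h1 : (u.map (dist x)).card = u.card := Multiset.card_map _ _
    rw [hmap] at h1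
    have h2 : (↑t : Multiset ℝ).card = t.length := Multiset.coe_card _
    rw [h2] at h1
    rw [← h1, ht, List.length_take, length_sortedDists, min_eq_left hm]
  refine ⟨⟨u, hnodup⟩, ?_, hcardu, ?_, ?_⟩
  · intro q hq; exact Multiset.mem_of_le hu hq
  · rw [kdist]
    congr 1
    congr 1
    have h3 : ∑ q ∈ (⟨u, hnodup⟩ : Finset X), dist x q ^ 2
        = (u.map (fun q => dist x q ^ 2)).sum := rfl
    rw [h3, show (fun q => dist x q ^ 2) = (fun r => r ^ 2) ∘ (dist x) from rfl,
      ← Multiset.map_map, hmap]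
    rw [Multiset.map_coe, Multiset.sum_coe]
  · intro q hq
    have h4 : dist x q ∈ u.map (dist x) := Multiset.mem_map_of_mem _ hq
    rw [hmap] at h4
    exact h4

lemma kdist_le_add (P : Finset X) (m : ℕ) (hm1 : 1 ≤ m) (hm : m ≤ P.card) (x y : X) :
    kdist P m y ≤ kdist P m x + dist x y := by
  obtain ⟨S, hSP, hcard, hEq, -⟩ := kdist_exists_finset P m x hm
  refine (kdist_le_finset P m y S hSP hcard).trans ?_
  have ha : 0 ≤ kdist P m x := kdist_nonneg _ _ _
  have hd : (0 : ℝ) ≤ dist x y := dist_nonneg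
  have hm0 : (0 : ℝ) < m := by exact_mod_cast hm1
  have hsq : 0 ≤ (1 / (m : ℝ)) * ∑ q ∈ S, dist x q ^ 2 := by
    have h0 : 0 ≤ ∑ q ∈ S, dist x q ^ 2 := Finset.sum_nonneg fun q _ => sq_nonneg _
    positivity
  have hSx : ∑ q ∈ S, dist x q ^ 2 = m * kdist P m x ^ 2 := by
    have h1 : kdist P m x ^ 2 = (1 / (m : ℝ)) * ∑ q ∈ S, dist x q ^ 2 := by
      rw [hEq, Real.sq_sqrt hsq]
    rw [h1]
    field_simp
  have h3 : 0 ≤ ∑ q ∈ S, dist x q := Finset.sum_nonneg fun q _ => dist_nonneg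
  have hCS : ∑ q ∈ S, dist x q ≤ m * kdist P m x := by
    have h2 : (∑ q ∈ S, dist x q) ^ 2 ≤ S.card * ∑ q ∈ S, dist x q ^ 2 :=
      sq_sum_le_card_mul_sum_sq
    rw [hcard, hSx] at h2
    nlinarith [mul_nonneg hm0.le ha]
  have hSy : ∑ q ∈ S, dist y q ^ 2 ≤ m * (kdist P m x + dist x y) ^ 2 := by
    have h5 : ∀ q ∈ S, dist y q ^ 2 ≤ dist x q ^ 2 + 2 * dist x y * dist x q + dist x y ^ 2 := by
      intro q _
      have htri : dist y q ≤ dist x y + dist x q := by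
        rw [dist_comm x y]
        exact dist_triangle y x q
      nlinarith [dist_nonneg (x := y) (y := q), dist_nonneg (x := x) (y := q)]
    calc ∑ q ∈ S, dist y q ^ 2
        ≤ ∑ q ∈ S, (dist x q ^ 2 + 2 * dist x y * dist x q + dist x y ^ 2) :=
          Finset.sum_le_sum h5
      _ = (∑ q ∈ S, dist x q ^ 2) + 2 * dist x y * (∑ q ∈ S, dist x q) + m * dist x y ^ 2 := by
          rw [Finset.sum_add_distrib, Finset.sum_add_distrib, ← Finset.mul_sum,
            Finset.sum_const, hcard]
          ring
      _ ≤ m * kdist P m x ^ 2 + 2 * dist x y * (m * kdist P m x) + m * dist x y ^ 2 := by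
          rw [hSx]
          have := mul_le_mul_of_nonneg_left hCS (by positivity : (0:ℝ) ≤ 2 * dist x y)
          linarith
      _ = m * (kdist P m x + dist x y) ^ 2 := by ring
  have h6 : (1 / (m : ℝ)) * ∑ q ∈ S, dist y q ^ 2 ≤ (kdist P m x + dist x y) ^ 2 := by
    rw [div_mul_eq_mul_div, one_mul, div_le_iff₀ hm0]
    linarith [hSy]
  calc Real.sqrt ((1 / (m : ℝ)) * ∑ q ∈ S, dist y q ^ 2)
      ≤ Real.sqrt ((kdist P m x + dist x y) ^ 2) := Real.sqrt_le_sqrt h6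
    _ = kdist P m x + dist x y := Real.sqrt_sq (by positivity)

lemma take_le_sqrt_two_kdist (P : Finset X) (k k' : ℕ) (hk : 1 ≤ k) (hk'k : k' ≤ k)
    (hkP : 2 * k ≤ P.card) (x : X) {a : ℝ} (ha : a ∈ (sortedDists P x).take k') :
    a ≤ Real.sqrt 2 * kdist P (2 * k) x := by
  set s := sortedDists P x with hs
  have hsorted : s.Pairwise (· ≤ ·) := sortedDists_sorted P x
  have hlen : s.length = P.card := length_sortedDists P x
  have ha0 : 0 ≤ a := sortedDists_nonneg (List.take_subset _ _ ha)
  have hatk : a ∈ s.take k := by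
    have h0 : s.take k' = (s.take k).take k' := by
      rw [List.take_take, min_eq_left hk'k]
    rw [h0] at ha
    exact List.take_subset _ _ ha
  have hkey : ∀ b ∈ (s.drop k).take k, a ≤ b := by
    intro b hb
    have hpw : (s.take k ++ s.drop k).Pairwise (· ≤ ·) := by
      rw [List.take_append_drop]; exact hsorted
    exact (List.pairwise_append.mp hpw).2.2 a hatk b (List.take_subset _ _ hb)
  set κ := kdist P (2 * k) x with hκ
  have hκ0 : 0 ≤ κ := kdist_nonneg _ _ _
  have hSum : κ ^ 2 = (1 / (2 * k : ℝ)) * ((s.take (2 * k)).map (fun r => r ^ 2)).sum := by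
    rw [hκ, kdist, Real.sq_sqrt]
    · push_cast; ring_nf; rfl
    · refine mul_nonneg (by positivity) (List.sum_nonneg ?_)
      intro r hr; obtain ⟨b, _, rfl⟩ := List.mem_map.mp hr; positivity
  have hlen2 : ((s.drop k).take k).length = k := by
    rw [List.length_take, List.length_drop, hlen]
    omega
  have hlow : (k : ℝ) * a ^ 2 ≤ (((s.drop k).take k).map (fun r => r ^ 2)).sum := by
    have h1 : ∀ r ∈ ((s.drop k).take k).map (fun r => r ^ 2), a ^ 2 ≤ r := by
      intro r hr
      obtain ⟨b, hb, rfl⟩ := List.mem_map.mp hr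
      exact pow_le_pow_left₀ ha0 (hkey b hb) 2
    have h2 := List.card_nsmul_le_sum _ _ h1
    rw [List.length_map, hlen2] at h2
    simpa [nsmul_eq_mul, mul_comm] using h2
  have hsplit : ((s.take (2 * k)).map (fun r => r ^ 2)).sum
      = ((s.take k).map (fun r => r ^ 2)).sum
        + (((s.drop k).take k).map (fun r => r ^ 2)).sum := by
    rw [two_mul, List.take_add, List.map_append, List.sum_append]
  have hfirst : 0 ≤ ((s.take k).map (fun r => r ^ 2)).sum :=
    List.sum_nonneg (by intro r hr; obtain ⟨b, _, rfl⟩ := List.mem_map.mp hr; positivity)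
  have hk0 : (0 : ℝ) < k := by exact_mod_cast hk
  have hbig : (k : ℝ) * a ^ 2 ≤ ((s.take (2 * k)).map (fun r => r ^ 2)).sum := by
    rw [hsplit]; linarith
  have ha2 : a ^ 2 ≤ 2 * κ ^ 2 := by
    rw [hSum]
    rw [show (2 : ℝ) * ((1 / (2 * (k : ℝ))) * ((s.take (2 * k)).map (fun r => r ^ 2)).sum)
        = ((s.take (2 * k)).map (fun r => r ^ 2)).sum / k by field_simp]
    rw [le_div_iff₀ hk0]
    linarith
  have hfin : a ≤ Real.sqrt (2 * κ ^ 2) := (Real.le_sqrt ha0 (by positivity)).mpr ha2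
  calc a ≤ Real.sqrt (2 * κ ^ 2) := hfin
    _ = Real.sqrt 2 * κ := by
        rw [Real.sqrt_mul (by norm_num), Real.sqrt_sq hκ0]

/-- `P` is an ε_k-noisy sample of `K`:
(1) the k-distance is at most ε on `K`; (2) every point of the space is within
`kdist + ε` of `K`. -/
def NoisySample (P : Finset X) (k : ℕ) (K : Set X) (ε : ℝ) : Prop :=
  (∀ x ∈ K, kdist P k x ≤ ε) ∧ ∀ x : X, infDist x K ≤ kdist P k x + ε

open scoped Classical in
/-- One declutter-resample step with parameter 2k (and resampling constant C = 10+2√2)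
preserves the (ε_{k'}, c)-uniform noisy sample condition for any k' ≤ k, provided P is a
weak (ε_{2k}, 2)-uniform noisy sample of K. -/
theorem resample_preserves_sampling (P : Finset X) (k k' : ℕ) (hk : 1 ≤ k')
    (hk'k : k' ≤ k) (hkP : 2 * k ≤ P.card)
    (K : Set X) (hK : IsCompact K) (hKne : K.Nonempty)
    (ε2k ε' c : ℝ) (hc : 0 < c)
    -- P is a weak (ε_{2k}, 2)-uniform noisy sample of K:
    (hweak1 : ∀ x ∈ K, kdist P (2 * k) x ≤ ε2k)
    (hweak3 : ∀ p ∈ P, ε2k / 2 ≤ kdist P (2 * k) p)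
    -- P is a (ε_{k'}, c)-uniform noisy sample of K:
    (hkp1 : NoisySample P k' K ε')
    (hkp3 : ∀ p ∈ P, ε' / c ≤ kdist P k' p)
    (Q : List X)
    (hQ : IsDeclutterOutput (fun a b => dist a b) (kdist P (2 * k)) P Q)
    (P' : Finset X)
    (hP' : P' = P.filter
      (fun p => ∃ q ∈ Q, dist p q ≤ (10 + 2 * Real.sqrt 2) * kdist P (2 * k) q)) :
    NoisySample P' k' K ε' ∧ ∀ p ∈ P', ε' / c ≤ kdist P' k' p := by
  classical
  obtain ⟨x₀, hx₀⟩ := hKne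
  have hk1 : 1 ≤ k := hk.trans hk'k
  have h2k : 1 ≤ 2 * k := by omega
  have hε2k : 0 ≤ ε2k := (kdist_nonneg P (2 * k) x₀).trans (hweak1 x₀ hx₀)
  have hk'card : k' ≤ P.card := by omega
  have hP'subP : P' ⊆ P := by rw [hP']; exact Finset.filter_subset _ _
  have hmemP' : ∀ p, p ∈ P' ↔ p ∈ P ∧
      ∃ q ∈ Q, dist p q ≤ (10 + 2 * Real.sqrt 2) * kdist P (2 * k) q := by
    intro p
    rw [hP', Finset.mem_filter]
  obtain ⟨L, hLperm, hLsorted, hQdef⟩ := hQ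
  have hQsubP : ∀ q ∈ Q, q ∈ P := by
    intro q hq
    rw [hQdef, declutter] at hq
    rcases declutterAux_subset _ _ L [] q hq with h | h
    · simp at h
    · exact Finset.mem_toList.mp (hLperm.mem_iff.mp h)
  have hcover : ∀ p ∈ P, ∃ q ∈ Q, dist p q ≤ 2 * kdist P (2 * k) p := by
    intro p hp
    have hpL : p ∈ L := hLperm.mem_iff.mpr (Finset.mem_toList.mpr hp)
    rw [hQdef, declutter]
    exact declutterAux_cover _ _ (fun z => kdist_nonneg P (2 * k) z)
      (fun z => dist_self z) L [] p hpL
  have hs2 : (0 : ℝ) ≤ Real.sqrt 2 := Real.sqrt_nonneg 2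
  have hs2' : Real.sqrt 2 ≤ 3 := by
    have h9 : Real.sqrt 2 ≤ Real.sqrt 9 := Real.sqrt_le_sqrt (by norm_num)
    rwa [show (9:ℝ) = 3 ^ 2 by norm_num, Real.sqrt_sq (by norm_num)] at h9
  have hnear : ∀ x ∈ K, ∀ p ∈ P, dist x p ≤ Real.sqrt 2 * ε2k → p ∈ P' := by
    intro x hx p hp hdist
    have hlip : kdist P (2 * k) p ≤ kdist P (2 * k) x + dist x p :=
      kdist_le_add P (2 * k) h2k hkP x p
    obtain ⟨q, hqQ, hq⟩ := hcover p hp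
    have hq2 : ε2k / 2 ≤ kdist P (2 * k) q := hweak3 q (hQsubP q hqQ)
    have hkq : 0 ≤ kdist P (2 * k) q := kdist_nonneg _ _ _
    have hx1 : kdist P (2 * k) x ≤ ε2k := hweak1 x hx
    rw [hmemP' p]
    refine ⟨hp, q, hqQ, ?_⟩
    nlinarith [hq, hlip, hdist, hx1, hq2, hkq, hε2k, hs2, hs2']
  have hS : ∀ x ∈ K, ∃ S : Finset X, S ⊆ P' ∧ S.card = k' ∧
      kdist P k' x = Real.sqrt ((1 / (k' : ℝ)) * ∑ q ∈ S, dist x q ^ 2) := by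
    intro x hx
    obtain ⟨S, hSP, hcard, hEq, hmem⟩ := kdist_exists_finset P k' x hk'card
    refine ⟨S, ?_, hcard, hEq⟩
    intro q hq
    refine hnear x hx q (hSP hq) ?_
    have h1 : dist x q ≤ Real.sqrt 2 * kdist P (2 * k) x :=
      take_le_sqrt_two_kdist P k k' hk1 hk'k hkP x (hmem q hq)
    have h2 : kdist P (2 * k) x ≤ ε2k := hweak1 x hx
    nlinarith [hs2]
  have hcard' : k' ≤ P'.card := by
    obtain ⟨S, hSP', hcard, -⟩ := hS x₀ hx₀
    calc k' = S.card := hcard.symm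
      _ ≤ P'.card := Finset.card_le_card hSP'
  have hmono : ∀ y : X, kdist P k' y ≤ kdist P' k' y := by
    intro y
    obtain ⟨S, hSP', hcard, hEq, -⟩ := kdist_exists_finset P' k' y hcard'
    rw [hEq]
    exact kdist_le_finset P k' y S (hSP'.trans hP'subP) hcard
  have hcond1 : ∀ x ∈ K, kdist P' k' x ≤ ε' := by
    intro x hx
    obtain ⟨S, hSP', hcard, hEq⟩ := hS x hx
    calc kdist P' k' x ≤ Real.sqrt ((1 / (k' : ℝ)) * ∑ q ∈ S, dist x q ^ 2) :=
          kdist_le_finset P' k' x S hSP' hcard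
      _ = kdist P k' x := hEq.symm
      _ ≤ ε' := hkp1.1 x hx
  refine ⟨⟨hcond1, fun y => (hkp1.2 y).trans ?_⟩, fun p hp => (hkp3 p (hP'subP hp)).trans ?_⟩
  · linarith [hmono y]
  · exact hmono p
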